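/- arXiv:0809.1353 — 5 statements merged into one kernel-verified Lean document; each statement's English description precedes it below -/
import Mathlib

section
/- Let (x, c, η) with x > 0, c ≥ 0, η ≥ 0 satisfy η < H(F⁻¹(x, c)). Then the partial derivative of G with respect to its first argument exists at (x, c, η) and is given by ∂G/∂x (x, c, η) = φ(G(x, c, η)) · exp(−c ∫_D^{F⁻¹(x, c)} ψ(r) dr) / φ(F⁻¹(x, c)). -/
open MeasureTheory

/-- `H(x) = ∫_D^x dr / φ(r)`. -/
noncomputable def Hfun (D : ℝ) (φ : ℝ → ℝ) (x : ℝ) : ℝ := ∫ r in D..x, 1 / φ r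

/-- `H⁻¹ : [0, I) → [D, ∞)`, the inverse of `H` on `[D, ∞)`. -/
noncomputable def Hinv (D : ℝ) (φ : ℝ → ℝ) (y : ℝ) : ℝ :=
  Function.invFunOn (Hfun D φ) (Set.Ici D) y

/-- `F(x, c) = ∫_D^x exp(c ∫_D^t ψ(r) dr) dt`. -/
noncomputable def Ffun (D : ℝ) (ψ : ℝ → ℝ) (x c : ℝ) : ℝ :=
  ∫ t in D..x, Real.exp (c * ∫ r in D..t, ψ r)

/-- `F⁻¹(·, c) : [0, ∞) → [D, ∞)`, the inverse of `F(·, c)` on `[D, ∞)`. -/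
noncomputable def Finv (D : ℝ) (ψ : ℝ → ℝ) (y c : ℝ) : ℝ :=
  Function.invFunOn (fun x => Ffun D ψ x c) (Set.Ici D) y

/-- `G(x, c, η) = H⁻¹(H(F⁻¹(x, c)) − η)`. -/
noncomputable def Gfun (D : ℝ) (φ ψ : ℝ → ℝ) (x c η : ℝ) : ℝ :=
  Hinv D φ (Hfun D φ (Finv D ψ x c) - η)

/-- The domain `𝒢 = {(x, c, η) ∈ [0, ∞)³ : η ≤ H(F⁻¹(x, c))}` of `G`. -/
def Gset (D : ℝ) (φ ψ : ℝ → ℝ) : Set (ℝ × ℝ × ℝ) :=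
  {p | 0 ≤ p.1 ∧ 0 ≤ p.2.1 ∧ 0 ≤ p.2.2 ∧ p.2.2 ≤ Hfun D φ (Finv D ψ p.1 p.2.1)}

/-- `invFunOn` only depends on values of the function on the set. -/
lemma invFunOn_congr {f g : ℝ → ℝ} {s : Set ℝ} (h : Set.EqOn f g s) (y : ℝ) :
    Function.invFunOn f s y = Function.invFunOn g s y := by
  have hp : (fun a => a ∈ s ∧ f a = y) = (fun a => a ∈ s ∧ g a = y) := by
    funext a
    by_cases ha : a ∈ s
    · simp [ha, h ha]
    · simp [ha]
  unfold Function.invFunOn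
  rw [hp]

/-- Derivative of `invFunOn` for a strictly monotone function on `[D, ∞)`. -/
lemma hasDerivAt_invFunOn {f : ℝ → ℝ} {D a x f' : ℝ}
    (hfm : StrictMonoOn f (Set.Ici D)) (haD : D < a) (hfa : f a = x)
    (hsurj : ∀ᶠ u in nhds x, ∃ t ∈ Set.Ici D, f t = u)
    (hder : HasDerivAt f f' a) (hf' : f' ≠ 0) :
    HasDerivAt (Function.invFunOn f (Set.Ici D)) f'⁻¹ x := by
  set T := Function.invFunOn f (Set.Ici D) with hT
  have haI : a ∈ Set.Ici D := le_of_lt haD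
  have hTx : T x = a := by rw [← hfa]; exact hfm.injOn.leftInvOn_invFunOn haI
  have hev : ∀ᶠ u in nhds x, f (T u) = u ∧ T u ∈ Set.Ici D := by
    filter_upwards [hsurj] with u hu
    exact ⟨Function.invFunOn_eq hu, Function.invFunOn_mem hu⟩
  have hcont : ContinuousAt T x := by
    rw [ContinuousAt, hTx]
    refine tendsto_order.2 ⟨?_, ?_⟩
    · intro b hb
      by_cases hbD : b < D
      · filter_upwards [hev] with u hu
        exact lt_of_lt_of_le hbD hu.2
      · push_neg at hbD
        have hfb : f b < x := hfa ▸ hfm hbD haI hb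
        filter_upwards [hev, eventually_gt_nhds hfb] with u hu hu2
        by_contra hcon
        push_neg at hcon
        have : f (T u) ≤ f b := hfm.monotoneOn hu.2 hbD hcon
        rw [hu.1] at this
        exact absurd hu2 (not_lt.2 this)
    · intro b hb
      have hbI : b ∈ Set.Ici D := le_of_lt (haD.trans hb)
      have hfb : x < f b := hfa ▸ hfm haI hbI hb
      filter_upwards [hev, eventually_lt_nhds hfb] with u hu hu2
      by_contra hcon
      push_neg at hcon
      have : f b ≤ f (T u) := hfm.monotoneOn hbI hu.2 hcon
      rw [hu.1] at this
      exact absurd hu2 (not_lt.2 this)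
  exact HasDerivAt.of_local_left_inverse hcont (hTx ▸ hder) hf' (hev.mono fun u hu => hu.1)

/-- If `x > 0`, `c ≥ 0`, `η ≥ 0` and `η < H(F⁻¹(x, c))`, then the partial
derivative of `G` with respect to its first argument exists at `(x, c, η)` and is given by
`∂G/∂x (x,c,η) = φ(G(x,c,η)) · exp(−c ∫_D^{F⁻¹(x,c)} ψ(r) dr) / φ(F⁻¹(x,c))`. -/
theorem stmt_4 (D : ℝ) (hD : 0 ≤ D) (φ ψ : ℝ → ℝ)
    (hφc : ContinuousOn φ (Set.Ici D)) (hφpos : ∀ r ∈ Set.Ici D, 0 < φ r)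
    (hψc : ContinuousOn ψ (Set.Ici D)) (hψnn : ∀ r ∈ Set.Ici D, 0 ≤ ψ r)
    (x c η : ℝ) (hx : 0 < x) (hc : 0 ≤ c) (hη : 0 ≤ η)
    (hlt : η < Hfun D φ (Finv D ψ x c)) :
    HasDerivAt (fun u => Gfun D φ ψ u c η)
      (φ (Gfun D φ ψ x c η) * Real.exp (-(c * ∫ r in D..(Finv D ψ x c), ψ r)) /
        φ (Finv D ψ x c)) x := by
  -- continuous extensions of φ and ψ to all of ℝ
  set φE : ℝ → ℝ := fun r => φ (max r D) with hφEdef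
  set ψE : ℝ → ℝ := fun r => ψ (max r D) with hψEdef
  have hmax : ∀ r : ℝ, max r D ∈ Set.Ici D := fun r => le_max_right r D
  have hφEc : Continuous φE :=
    hφc.comp_continuous (continuous_id.max continuous_const) hmax
  have hψEc : Continuous ψE :=
    hψc.comp_continuous (continuous_id.max continuous_const) hmax
  have hφEpos : ∀ r, 0 < φE r := fun r => hφpos _ (hmax r)
  have hψEnn : ∀ r, 0 ≤ ψE r := fun r => hψnn _ (hmax r)
  have hφEE : ∀ r ∈ Set.Ici D, φE r = φ r := by
    intro r hr; simp only [hφEdef]; rw [max_eq_left hr]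
  have hψEE : ∀ r ∈ Set.Ici D, ψE r = ψ r := by
    intro r hr; simp only [hψEdef]; rw [max_eq_left hr]
  -- the primitive of ψE and the integrand E of F
  have hPc : Continuous (fun u => ∫ r in D..u, ψE r) := by
    rw [continuous_iff_continuousAt]
    exact fun t => ((hψEc.integral_hasStrictDerivAt D t).hasDerivAt).continuousAt
  set E : ℝ → ℝ := fun t => Real.exp (c * ∫ r in D..t, ψE r) with hEdef
  have hEc : Continuous E := Real.continuous_exp.comp (continuous_const.mul hPc)
  have hEpos : ∀ t, 0 < E t := fun t => Real.exp_pos _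
  set FE : ℝ → ℝ := fun t => Ffun D ψE t c with hFEdef
  have hFEint : FE = fun t => ∫ s in D..t, E s := rfl
  have hFEder : ∀ t, HasDerivAt FE (E t) t := by
    intro t
    rw [hFEint]
    exact (hEc.integral_hasStrictDerivAt D t).hasDerivAt
  have hFEmono : StrictMono FE := by
    apply strictMono_of_deriv_pos
    intro t
    rw [(hFEder t).deriv]
    exact hEpos t
  have hFEc : Continuous FE := by
    rw [continuous_iff_continuousAt]
    exact fun t => (hFEder t).continuousAt
  have hFED : FE D = 0 := by rw [hFEint]; simp
  -- H with extended φ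
  set HE : ℝ → ℝ := Hfun D φE with hHEdef
  have hHEint : HE = fun t => ∫ r in D..t, 1 / φE r := rfl
  have hHEder : ∀ t, HasDerivAt HE (1 / φE t) t := by
    intro t
    rw [hHEint]
    exact ((continuous_const.div hφEc fun r => (hφEpos r).ne').integral_hasStrictDerivAt
      D t).hasDerivAt
  have hHEmono : StrictMono HE := by
    apply strictMono_of_deriv_pos
    intro t
    rw [(hHEder t).deriv]
    exact div_pos one_pos (hφEpos t)
  have hHEc : Continuous HE := by
    rw [continuous_iff_continuousAt]
    exact fun t => (hHEder t).continuousAt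
  have hHED : HE D = 0 := by rw [hHEint]; simp
  -- congruence between the original functions and the extended ones on [D, ∞)
  have hFcongr : ∀ t ∈ Set.Ici D, Ffun D ψ t c = FE t := by
    intro t ht
    rw [hFEdef]
    unfold Ffun
    apply intervalIntegral.integral_congr
    intro s hs
    rw [Set.uIcc_of_le ht] at hs
    dsimp only
    have hinner : (∫ r in D..s, ψ r) = ∫ r in D..s, ψE r := by
      apply intervalIntegral.integral_congr
      intro r hr
      rw [Set.uIcc_of_le hs.1] at hr
      exact (hψEE r hr.1).symm
    rw [hinner]
  have hHcongr : ∀ t ∈ Set.Ici D, Hfun D φ t = HE t := by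
    intro t ht
    rw [hHEdef]
    unfold Hfun
    apply intervalIntegral.integral_congr
    intro r hr
    rw [Set.uIcc_of_le ht] at hr
    dsimp only
    rw [hφEE r hr.1]
  have hFinveq : ∀ y, Finv D ψ y c = Function.invFunOn FE (Set.Ici D) y := by
    intro y
    unfold Finv
    exact invFunOn_congr (fun t ht => hFcongr t ht) y
  have hHinveq : ∀ y, Hinv D φ y = Function.invFunOn HE (Set.Ici D) y := by
    intro y
    unfold Hinv
    exact invFunOn_congr (fun t ht => hHcongr t ht) y
  -- growth bound for FE and surjectivity of FE onto positive reals
  have hFE_ge : ∀ t, D ≤ t → t - D ≤ FE t := by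
    intro t ht
    have h1 : (∫ _ in D..t, (1 : ℝ)) ≤ ∫ s in D..t, E s := by
      apply intervalIntegral.integral_mono_on ht intervalIntegrable_const
        (hEc.intervalIntegrable _ _)
      intro s hs
      have h0 : 0 ≤ c * ∫ r in D..s, ψE r :=
        mul_nonneg hc (intervalIntegral.integral_nonneg hs.1 fun r _ => hψEnn r)
      calc (1 : ℝ) = Real.exp 0 := by simp
        _ ≤ E s := Real.exp_le_exp.2 h0
    rw [hFEint]
    simpa using h1
  have hFsurj : ∀ u, 0 < u → ∃ t ∈ Set.Ici D, FE t = u := by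
    intro u hu
    have hle : D ≤ D + u := by linarith
    have hmem : u ∈ Set.Icc (FE D) (FE (D + u)) := by
      constructor
      · rw [hFED]; exact hu.le
      · have := hFE_ge (D + u) hle
        linarith
    obtain ⟨t, ht, hft⟩ := intermediate_value_Icc hle hFEc.continuousOn hmem
    exact ⟨t, ht.1, hft⟩
  have hsurjF : ∀ᶠ u in nhds x, ∃ t ∈ Set.Ici D, FE t = u := by
    filter_upwards [eventually_gt_nhds hx] with u hu
    exact hFsurj u hu
  -- the point A = F⁻¹(x, c)
  obtain ⟨A0, hA0mem, hA0x⟩ := hFsurj x hx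
  set A := Function.invFunOn FE (Set.Ici D) x with hAdef
  have hAmem : A ∈ Set.Ici D := Function.invFunOn_mem ⟨A0, hA0mem, hA0x⟩
  have hAx : FE A = x := Function.invFunOn_eq ⟨A0, hA0mem, hA0x⟩
  have hAD : D < A := by
    rcases lt_or_eq_of_le (show D ≤ A from hAmem) with h | h
    · exact h
    · exfalso; rw [← h, hFED] at hAx; exact absurd hAx.symm (ne_of_gt hx)
  have hFinvx : Finv D ψ x c = A := hFinveq x
  -- H-side data
  have hηA : η < HE A := by
    rw [hFinvx] at hlt
    rwa [hHcongr A hAmem] at hlt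
  set y0 : ℝ := HE A - η with hy0def
  have hy0pos : 0 < y0 := sub_pos.2 hηA
  have hy0lt : y0 < HE (A + 1) :=
    lt_of_le_of_lt (sub_le_self _ hη) (hHEmono (lt_add_one A))
  have hHsurj : ∀ y ∈ Set.Ioo (0 : ℝ) (HE (A + 1)), ∃ t ∈ Set.Ici D, HE t = y := by
    intro y hy
    have hle : D ≤ A + 1 := by linarith [hAD]
    have hmem : y ∈ Set.Icc (HE D) (HE (A + 1)) := by
      rw [hHED]; exact ⟨hy.1.le, hy.2.le⟩
    obtain ⟨t, ht, hft⟩ := intermediate_value_Icc hle hHEc.continuousOn hmem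
    exact ⟨t, ht.1, hft⟩
  have hsurjH : ∀ᶠ y in nhds y0, ∃ t ∈ Set.Ici D, HE t = y := by
    filter_upwards [Ioo_mem_nhds hy0pos hy0lt] with y hy
    exact hHsurj y hy
  obtain ⟨B0, hB0mem, hB0y⟩ := hHsurj y0 ⟨hy0pos, hy0lt⟩
  set B := Function.invFunOn HE (Set.Ici D) y0 with hBdef
  have hBmem : B ∈ Set.Ici D := Function.invFunOn_mem ⟨B0, hB0mem, hB0y⟩
  have hBy0 : HE B = y0 := Function.invFunOn_eq ⟨B0, hB0mem, hB0y⟩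
  have hBD : D < B := by
    rcases lt_or_eq_of_le (show D ≤ B from hBmem) with h | h
    · exact h
    · exfalso; rw [← h, hHED] at hBy0; exact absurd hBy0.symm (ne_of_gt hy0pos)
  -- the three derivatives
  have h1 : HasDerivAt (Function.invFunOn FE (Set.Ici D)) (E A)⁻¹ x :=
    hasDerivAt_invFunOn (hFEmono.strictMonoOn _) hAD hAx hsurjF (hFEder A) (hEpos A).ne'
  have h2 : HasDerivAt (fun v => HE v - η) (1 / φE A) A := (hHEder A).sub_const η
  have h3 : HasDerivAt (Function.invFunOn HE (Set.Ici D)) (1 / φE B)⁻¹ y0 :=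
    hasDerivAt_invFunOn (hHEmono.strictMonoOn _) hBD hBy0 hsurjH (hHEder B)
      (div_pos one_pos (hφEpos B)).ne'
  have hcomp1 : HasDerivAt (fun v => Function.invFunOn HE (Set.Ici D) (HE v - η))
      ((1 / φE B)⁻¹ * (1 / φE A)) A := by have := HasDerivAt.comp A h3 h2; exact this
  have hcomp2 : HasDerivAt
      (fun u => Function.invFunOn HE (Set.Ici D)
        (HE (Function.invFunOn FE (Set.Ici D) u) - η))
      ((1 / φE B)⁻¹ * (1 / φE A) * (E A)⁻¹) x := by
    have h1' : HasDerivAt (fun v => Function.invFunOn HE (Set.Ici D) (HE v - η))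
        ((1 / φE B)⁻¹ * (1 / φE A)) (Function.invFunOn FE (Set.Ici D) x) := by
      rw [← hAdef]; exact hcomp1
    exact HasDerivAt.comp x h1' h1
  -- Gfun agrees with the composed function near x
  have hGeq : (fun u => Gfun D φ ψ u c η) =ᶠ[nhds x]
      (fun u => Function.invFunOn HE (Set.Ici D)
        (HE (Function.invFunOn FE (Set.Ici D) u) - η)) := by
    filter_upwards [hsurjF] with u hu
    have hmemu : Function.invFunOn FE (Set.Ici D) u ∈ Set.Ici D :=
      Function.invFunOn_mem hu
    unfold Gfun
    rw [hFinveq u, hHcongr _ hmemu, hHinveq]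
  -- compute Gfun at x
  have hGx : Gfun D φ ψ x c η = B := by
    unfold Gfun
    rw [hFinvx, hHcongr A hAmem, hHinveq, ← hy0def, ← hBdef]
  -- the derivative value matches
  have hval : φ (Gfun D φ ψ x c η) * Real.exp (-(c * ∫ r in D..(Finv D ψ x c), ψ r)) /
      φ (Finv D ψ x c) = (1 / φE B)⁻¹ * (1 / φE A) * (E A)⁻¹ := by
    have hint : (∫ r in D..A, ψ r) = ∫ r in D..A, ψE r := by
      apply intervalIntegral.integral_congr
      intro r hr
      rw [Set.uIcc_of_le hAmem] at hr
      exact (hψEE r hr.1).symm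
    rw [hGx, hFinvx, hint, ← hφEE B hBmem, ← hφEE A hAmem]
    rw [Real.exp_neg, hEdef]
    rw [one_div, inv_inv]
    field_simp
  rw [hval]
  exact hcomp2.congr_of_eventuallyEq hGeq
end

section
/- Assume in addition that φ is of class C¹ on [D, ∞). Let (x, c, η) with x > 0, c ≥ 0, η ≥ 0 satisfy η < H(F⁻¹(x, c)). Then the second partial derivative of G with respect to its first argument exists at (x, c, η) and equals ∂²G/∂x² (x, c, η) = (∂G/∂x (x, c, η))² / φ(G(x, c, η)) · [ φ'(G(x, c, η)) − φ'(F⁻¹(x, c)) − c · φ(F⁻¹(x, c)) · ψ(F⁻¹(x, c)) ], where ∂G/∂x (x, c, η) = φ(G(x, c, η)) · exp(−c ∫_D^{F⁻¹(x, c)} ψ(r) dr) / φ(F⁻¹(x, c)). -/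
open MeasureTheory

open Set Filter Topology

/-- Auxiliary: local properties of `invFunOn` for a strictly monotone continuous function
on `Ici D`, at an image point of an interior point. -/
private lemma invFunOn_local {f : ℝ → ℝ} {D w : ℝ}
    (hmono : StrictMonoOn f (Set.Ici D))
    (hcont : ContinuousOn f (Set.Ici D)) (hw : D < w) :
    Function.invFunOn f (Set.Ici D) (f w) = w ∧
      ContinuousAt (Function.invFunOn f (Set.Ici D)) (f w) ∧
      ∀ᶠ z in 𝓝 (f w), f (Function.invFunOn f (Set.Ici D) z) = z := by
  set g := Function.invFunOn f (Set.Ici D) with hg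
  have hinj := hmono.injOn
  have hwmem : w ∈ Set.Ici D := le_of_lt hw
  have heq : g (f w) = w :=
    hinj (Function.invFunOn_apply_mem hwmem) hwmem (Function.invFunOn_apply_eq hwmem)
  have key : ∀ a b : ℝ, D ≤ a → a < w → w < b →
      ∀ z ∈ Set.Ioo (f a) (f b), f (g z) = z ∧ g z ∈ Set.Ioo a b := by
    intro a b ha haw hwb z hz
    have hab : a ≤ b := (haw.trans hwb).le
    have hsub : Set.Icc a b ⊆ Set.Ici D := fun t ht => le_trans ha ht.1
    have hmem : z ∈ f '' Set.Icc a b := by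
      apply intermediate_value_Icc hab (hcont.mono hsub)
      exact ⟨hz.1.le, hz.2.le⟩
    obtain ⟨t, ht, hft⟩ := hmem
    have hex : ∃ u ∈ Set.Ici D, f u = z := ⟨t, hsub ht, hft⟩
    have h1 : f (g z) = z := Function.invFunOn_eq hex
    have h2 : g z ∈ Set.Ici D := Function.invFunOn_mem hex
    refine ⟨h1, ?_, ?_⟩
    · have : f a < f (g z) := by rw [h1]; exact hz.1
      exact (hmono.lt_iff_lt ha h2).1 this
    · have : f (g z) < f b := by rw [h1]; exact hz.2
      exact (hmono.lt_iff_lt h2 (hsub ⟨hab, le_refl b⟩)).1 this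
  have hev : ∀ᶠ z in 𝓝 (f w), f (g z) = z := by
    have ha : D ≤ (D + w) / 2 := by linarith
    have haw : (D + w) / 2 < w := by linarith
    have hwb : w < w + 1 := by linarith
    have hU : Set.Ioo (f ((D + w) / 2)) (f (w + 1)) ∈ 𝓝 (f w) :=
      Ioo_mem_nhds (hmono ha hwmem haw) (hmono hwmem (le_of_lt (hw.trans hwb)) hwb)
    filter_upwards [hU] with z hz
    exact (key _ _ ha haw hwb z hz).1
  refine ⟨heq, ?_, hev⟩
  rw [ContinuousAt, heq, Metric.tendsto_nhds]
  intro ε hε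
  set a := max ((D + w) / 2) (w - ε / 2) with hadef
  set b := w + min 1 (ε / 2) with hbdef
  have ha : D ≤ a := le_trans (by linarith) (le_max_left _ _)
  have haw : a < w := max_lt (by linarith) (by linarith)
  have hwb : w < b := lt_add_of_pos_right _ (lt_min one_pos (by linarith))
  have hU : Set.Ioo (f a) (f b) ∈ 𝓝 (f w) :=
    Ioo_mem_nhds (hmono ha hwmem haw) (hmono hwmem (hwmem.trans hwb.le) hwb)
  filter_upwards [hU] with z hz
  obtain ⟨h1, h2⟩ := key a b ha haw hwb z hz
  rw [Real.dist_eq, abs_lt]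
  have ha2 : w - ε / 2 ≤ a := le_max_right _ _
  have hb2 : b ≤ w + ε / 2 := by rw [hbdef]; linarith [min_le_right (1 : ℝ) (ε / 2)]
  have hgb : g z < w + ε / 2 := lt_of_lt_of_le h2.2 hb2
  have hga : w - ε / 2 < g z := lt_of_le_of_lt ha2 h2.1
  exact ⟨by linarith, by linarith⟩

/-- Assume moreover that `φ` is of class `C¹` on `[D, ∞)`, with derivative `φ'`.
If `x > 0`, `c ≥ 0`, `η ≥ 0` and `η < H(F⁻¹(x, c))`, then the first partial derivative of `G`
with respect to its first argument at `(x,c,η)` is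
`∂G/∂x (x,c,η) = φ(G(x,c,η)) · exp(−c ∫_D^{F⁻¹(x,c)} ψ(r) dr) / φ(F⁻¹(x,c))`, and the second
partial derivative of `G` with respect to its first argument exists at `(x,c,η)` and equals
`(∂G/∂x (x,c,η))² / φ(G(x,c,η)) · (φ'(G(x,c,η)) − φ'(F⁻¹(x,c)) − c·φ(F⁻¹(x,c))·ψ(F⁻¹(x,c)))`. -/
theorem stmt_5 (D : ℝ) (hD : 0 ≤ D) (φ φ' ψ : ℝ → ℝ)
    (hφc : ContinuousOn φ (Set.Ici D)) (hφpos : ∀ r ∈ Set.Ici D, 0 < φ r)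
    (hφd : ∀ r ∈ Set.Ici D, HasDerivWithinAt φ (φ' r) (Set.Ici D) r)
    (hφ'c : ContinuousOn φ' (Set.Ici D))
    (hψc : ContinuousOn ψ (Set.Ici D)) (hψnn : ∀ r ∈ Set.Ici D, 0 ≤ ψ r)
    (x c η : ℝ) (hx : 0 < x) (hc : 0 ≤ c) (hη : 0 ≤ η)
    (hlt : η < Hfun D φ (Finv D ψ x c)) :
    HasDerivAt (fun u => Gfun D φ ψ u c η)
      (φ (Gfun D φ ψ x c η) * Real.exp (-(c * ∫ r in D..(Finv D ψ x c), ψ r)) /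
        φ (Finv D ψ x c)) x ∧
    HasDerivAt
      (fun u => φ (Gfun D φ ψ u c η) * Real.exp (-(c * ∫ r in D..(Finv D ψ u c), ψ r)) /
        φ (Finv D ψ u c))
      ((φ (Gfun D φ ψ x c η) * Real.exp (-(c * ∫ r in D..(Finv D ψ x c), ψ r)) /
          φ (Finv D ψ x c)) ^ 2 / φ (Gfun D φ ψ x c η) *
        (φ' (Gfun D φ ψ x c η) - φ' (Finv D ψ x c) -
          c * φ (Finv D ψ x c) * ψ (Finv D ψ x c))) x := by
  classical
  have hmaxmem : ∀ r : ℝ, max r D ∈ Set.Ici D := fun r => Set.mem_Ici.2 (le_max_right r D)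
  -- extended ψ and its primitive
  set ψe : ℝ → ℝ := fun r => ψ (max r D) with hψedef
  have hψe_cont : Continuous ψe :=
    hψc.comp_continuous (continuous_id.max continuous_const) hmaxmem
  have hψe_eq : ∀ r ∈ Set.Ici D, ψe r = ψ r := fun r hr => by
    simp only [hψedef]; rw [max_eq_left hr]
  set Ψe : ℝ → ℝ := fun t => ∫ r in D..t, ψe r with hΨedef
  have hΨe_deriv : ∀ t, HasDerivAt Ψe (ψe t) t := fun t =>
    (hψe_cont.integral_hasStrictDerivAt D t).hasDerivAt
  have hΨe_cont : Continuous Ψe :=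
    Differentiable.continuous fun t => (hΨe_deriv t).differentiableAt
  have hΨ_eq : ∀ t ∈ Set.Ici D, (∫ r in D..t, ψ r) = Ψe t := by
    intro t ht
    simp only [hΨedef]
    apply intervalIntegral.integral_congr
    intro r hr
    rw [Set.uIcc_of_le ht] at hr
    exact (hψe_eq r hr.1).symm
  have hΨe_nonneg : ∀ t ∈ Set.Ici D, 0 ≤ Ψe t := fun t ht =>
    intervalIntegral.integral_nonneg ht fun u _ => hψnn _ (hmaxmem u)
  -- the function F, extended
  set ee : ℝ → ℝ := fun t => Real.exp (c * Ψe t) with heedef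
  have hee_cont : Continuous ee := Real.continuous_exp.comp (continuous_const.mul hΨe_cont)
  have hee_pos : ∀ t, 0 < ee t := fun t => Real.exp_pos _
  have hee_one : ∀ t ∈ Set.Ici D, 1 ≤ ee t := fun t ht =>
    Real.one_le_exp (mul_nonneg hc (hΨe_nonneg t ht))
  set Fe : ℝ → ℝ := fun u => ∫ t in D..u, ee t with hFedef
  have hFe_deriv : ∀ t, HasDerivAt Fe (ee t) t := fun t =>
    (hee_cont.integral_hasStrictDerivAt D t).hasDerivAt
  have hFe_cont : Continuous Fe :=
    Differentiable.continuous fun t => (hFe_deriv t).differentiableAt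
  have hFe_mono : StrictMono Fe := strictMono_of_deriv_pos fun t => by
    rw [(hFe_deriv t).deriv]; exact hee_pos t
  have hF_eq : ∀ u ∈ Set.Ici D, Ffun D ψ u c = Fe u := by
    intro u hu
    simp only [Ffun, hFedef, heedef]
    apply intervalIntegral.integral_congr
    intro t ht
    rw [Set.uIcc_of_le hu] at ht
    show Real.exp (c * ∫ r in D..t, ψ r) = Real.exp (c * Ψe t)
    rw [hΨ_eq t ht.1]
  have hFe_lb : ∀ u, D ≤ u → u - D ≤ Fe u := by
    intro u hu
    have h1 : (∫ t in D..u, (1 : ℝ)) ≤ ∫ t in D..u, ee t :=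
      intervalIntegral.integral_mono_on hu intervalIntegrable_const
        (hee_cont.intervalIntegrable _ _) fun t ht => hee_one t ht.1
    simpa using h1
  have hFeD : Fe D = 0 := intervalIntegral.integral_same
  -- surjectivity facts
  set v : ℝ := x + D + 1 with hvdef
  have hDv : D ≤ v := by simp only [hvdef]; linarith
  have hxv : x < Fe v := lt_of_lt_of_le (by simp only [hvdef]; linarith) (hFe_lb v hDv)
  have hFex : ∀ u ∈ Set.Ioo (0 : ℝ) (Fe v), ∃ a ∈ Set.Ici D, Ffun D ψ a c = u := by
    intro u hu
    have hmem : u ∈ Set.Icc (Fe D) (Fe v) := by rw [hFeD]; exact ⟨hu.1.le, hu.2.le⟩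
    obtain ⟨a, ha, hfa⟩ := intermediate_value_Icc hDv hFe_cont.continuousOn hmem
    exact ⟨a, ha.1, by rw [hF_eq a ha.1]; exact hfa⟩
  have hxmem : x ∈ Set.Ioo (0 : ℝ) (Fe v) := ⟨hx, hxv⟩
  set w := Finv D ψ x c with hwdef
  have hwF : Ffun D ψ w c = x :=
    Function.invFunOn_eq (f := fun u => Ffun D ψ u c) (hFex x hxmem)
  have hwmem : w ∈ Set.Ici D :=
    Function.invFunOn_mem (f := fun u => Ffun D ψ u c) (hFex x hxmem)
  have hFD0 : Ffun D ψ D c = 0 := by rw [hF_eq D Set.self_mem_Ici]; exact hFeD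
  have hwD : D < w := by
    rcases lt_or_eq_of_le (Set.mem_Ici.1 hwmem) with h | h
    · exact h
    · exfalso; rw [← h] at hwF; rw [hFD0] at hwF; linarith
  -- F as strictly monotone continuous function on `Ici D`
  have hF_mono : StrictMonoOn (fun u => Ffun D ψ u c) (Set.Ici D) := by
    intro a ha b hb hab
    simp only
    rw [hF_eq a ha, hF_eq b hb]
    exact hFe_mono hab
  have hF_cont : ContinuousOn (fun u => Ffun D ψ u c) (Set.Ici D) :=
    hFe_cont.continuousOn.congr fun u hu => hF_eq u hu
  obtain ⟨hW0, hWc, hWev⟩ := invFunOn_local hF_mono hF_cont hwD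
  rw [hwF] at hWc hWev
  have hfw_deriv : HasDerivAt (fun u => Ffun D ψ u c) (ee w) w := by
    refine (hFe_deriv w).congr_of_eventuallyEq ?_
    filter_upwards [Ici_mem_nhds hwD] with u hu
    exact hF_eq u hu
  have hWc' : ContinuousAt (fun y => Finv D ψ y c) x := hWc
  have hWev' : ∀ᶠ z in 𝓝 x, (fun u => Ffun D ψ u c) ((fun y => Finv D ψ y c) z) = z := hWev
  have hfw_deriv' : HasDerivAt (fun u => Ffun D ψ u c) (ee w) ((fun y => Finv D ψ y c) x) :=
    hfw_deriv
  have hW' : HasDerivAt (fun y => Finv D ψ y c) (ee w)⁻¹ x :=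
    HasDerivAt.of_local_left_inverse hWc' hfw_deriv' (ne_of_gt (hee_pos w)) hWev'
  -- extended φ and H
  set φe : ℝ → ℝ := fun r => φ (max r D) with hφedef
  have hφe_cont : Continuous φe :=
    hφc.comp_continuous (continuous_id.max continuous_const) hmaxmem
  have hφe_pos : ∀ r, 0 < φe r := fun r => hφpos _ (hmaxmem r)
  have hφe_eq : ∀ r ∈ Set.Ici D, φe r = φ r := fun r hr => by
    simp only [hφedef]; rw [max_eq_left hr]
  set qe : ℝ → ℝ := fun r => 1 / φe r with hqedef
  have hqe_cont : Continuous qe := continuous_const.div hφe_cont fun r => (hφe_pos r).ne'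
  have hqe_pos : ∀ r, 0 < qe r := fun r => one_div_pos.2 (hφe_pos r)
  set He : ℝ → ℝ := fun u => ∫ r in D..u, qe r with hHedef
  have hHe_deriv : ∀ t, HasDerivAt He (qe t) t := fun t =>
    (hqe_cont.integral_hasStrictDerivAt D t).hasDerivAt
  have hHe_cont : Continuous He :=
    Differentiable.continuous fun t => (hHe_deriv t).differentiableAt
  have hHe_mono : StrictMono He := strictMono_of_deriv_pos fun t => by
    rw [(hHe_deriv t).deriv]; exact hqe_pos t
  have hH_eq : ∀ u ∈ Set.Ici D, Hfun D φ u = He u := by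
    intro u hu
    simp only [Hfun, hHedef, hqedef]
    apply intervalIntegral.integral_congr
    intro r hr
    rw [Set.uIcc_of_le hu] at hr
    show 1 / φ r = 1 / φe r
    rw [hφe_eq r hr.1]
  have hHeD : He D = 0 := intervalIntegral.integral_same
  have hHD0 : Hfun D φ D = 0 := by rw [hH_eq D Set.self_mem_Ici]; exact hHeD
  -- the point y0 and g0
  set y0 := Hfun D φ w - η with hy0def
  have hy0pos : 0 < y0 := by simp only [hy0def]; linarith
  have hy0le : y0 ≤ He w := by
    rw [← hH_eq w hwmem]; simp only [hy0def]; linarith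
  have hexH : ∃ a ∈ Set.Ici D, Hfun D φ a = y0 := by
    have hmem : y0 ∈ Set.Icc (He D) (He w) := by rw [hHeD]; exact ⟨hy0pos.le, hy0le⟩
    obtain ⟨a, ha, hfa⟩ := intermediate_value_Icc (Set.mem_Ici.1 hwmem) hHe_cont.continuousOn hmem
    exact ⟨a, ha.1, by rw [hH_eq a ha.1]; exact hfa⟩
  set g0 := Gfun D φ ψ x c η with hg0def
  have hg0eq : g0 = Hinv D φ y0 := rfl
  have hg0H : Hfun D φ g0 = y0 := by
    rw [hg0eq]; exact Function.invFunOn_eq (f := Hfun D φ) hexH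
  have hg0mem : g0 ∈ Set.Ici D := by
    rw [hg0eq]; exact Function.invFunOn_mem hexH
  have hg0D : D < g0 := by
    rcases lt_or_eq_of_le (Set.mem_Ici.1 hg0mem) with h | h
    · exact h
    · exfalso; rw [← h] at hg0H; rw [hHD0] at hg0H; linarith
  -- H as strictly monotone continuous function on `Ici D`
  have hH_mono : StrictMonoOn (Hfun D φ) (Set.Ici D) := fun a ha b hb hab => by
    rw [hH_eq a ha, hH_eq b hb]; exact hHe_mono hab
  have hH_cont : ContinuousOn (Hfun D φ) (Set.Ici D) := hHe_cont.continuousOn.congr hH_eq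
  obtain ⟨hHi0, hHic, hHiev⟩ := invFunOn_local hH_mono hH_cont hg0D
  rw [hg0H] at hHic hHiev
  have hH_deriv : ∀ t, D < t → HasDerivAt (Hfun D φ) (qe t) t := fun t ht => by
    refine (hHe_deriv t).congr_of_eventuallyEq ?_
    filter_upwards [Ici_mem_nhds ht] with u hu
    exact hH_eq u hu
  have hHinv' : HasDerivAt (Hinv D φ) (qe g0)⁻¹ y0 := by
    refine HasDerivAt.of_local_left_inverse hHic ?_ (ne_of_gt (hqe_pos g0)) hHiev
    rw [← hg0eq]
    exact hH_deriv g0 hg0D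
  -- first derivative
  have hHW : HasDerivAt (fun u => Hfun D φ (Finv D ψ u c) - η) (qe w * (ee w)⁻¹) x := by
    have h1 := (hH_deriv w hwD).comp x hW'
    exact h1.sub_const η
  have hG' : HasDerivAt (fun u => Gfun D φ ψ u c η) ((qe g0)⁻¹ * (qe w * (ee w)⁻¹)) x := by
    have h1 := hHinv'.comp x hHW
    exact h1
  have hφwne : φ w ≠ 0 := (hφpos w hwmem).ne'
  have hφg0ne : φ g0 ≠ 0 := (hφpos g0 hg0mem).ne'
  have hAe : Real.exp (-(c * ∫ r in D..w, ψ r)) = (ee w)⁻¹ := by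
    rw [hΨ_eq w hwmem]
    simp only [heedef]
    rw [Real.exp_neg]
  have hval1 : (qe g0)⁻¹ * (qe w * (ee w)⁻¹)
      = φ g0 * Real.exp (-(c * ∫ r in D..w, ψ r)) / φ w := by
    rw [hAe]
    simp only [hqedef]
    rw [hφe_eq g0 hg0mem, hφe_eq w hwmem, one_div, one_div, inv_inv]
    ring
  have hgoal1 : HasDerivAt (fun u => Gfun D φ ψ u c η)
      (φ g0 * Real.exp (-(c * ∫ r in D..w, ψ r)) / φ w) x := hval1 ▸ hG'
  refine ⟨hgoal1, ?_⟩
  -- second derivative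
  have hWmemEv : ∀ᶠ u in 𝓝 x, Finv D ψ u c ∈ Set.Ici D := by
    filter_upwards [Ioo_mem_nhds hx hxv] with u hu
    exact Function.invFunOn_mem (f := fun u => Ffun D ψ u c) (hFex u hu)
  have hφ'g0 : HasDerivAt φ (φ' g0) g0 := (hφd g0 hg0mem).hasDerivAt (Ici_mem_nhds hg0D)
  have hφ'w : HasDerivAt φ (φ' w) w := (hφd w hwmem).hasDerivAt (Ici_mem_nhds hwD)
  have hφG : HasDerivAt (fun u => φ (Gfun D φ ψ u c η))
      (φ' g0 * (φ g0 * Real.exp (-(c * ∫ r in D..w, ψ r)) / φ w)) x := hφ'g0.comp x hgoal1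
  have hΨW : HasDerivAt (fun u => Ψe (Finv D ψ u c)) (ψe w * (ee w)⁻¹) x :=
    by have h := (hΨe_deriv w).comp x hW'; exact h
  have hE : HasDerivAt (fun u => Real.exp (-(c * Ψe (Finv D ψ u c))))
      (Real.exp (-(c * Ψe w)) * -(c * (ψe w * (ee w)⁻¹))) x := by
    have h1 := ((hΨW.const_mul c).neg).exp
    exact h1
  have hφW : HasDerivAt (fun u => φ (Finv D ψ u c)) (φ' w * (ee w)⁻¹) x := hφ'w.comp x hW'
  have hnum := hφG.mul hE
  have hquot := hnum.div hφW hφwne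
  have hfeq : (fun u => φ (Gfun D φ ψ u c η) *
        Real.exp (-(c * ∫ r in D..(Finv D ψ u c), ψ r)) / φ (Finv D ψ u c))
      =ᶠ[𝓝 x] fun u => φ (Gfun D φ ψ u c η) *
        Real.exp (-(c * Ψe (Finv D ψ u c))) / φ (Finv D ψ u c) := by
    filter_upwards [hWmemEv] with u hu
    rw [hΨ_eq _ hu]
  have hgoal2 := hquot.congr_of_eventuallyEq hfeq
  convert hgoal2 using 1
  case e'_4 => rfl
  case e'_5 => rfl
  have hψw : ψe w = ψ w := hψe_eq w hwmem
  have hEexp : Real.exp (-(c * Ψe w)) = (ee w)⁻¹ := by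
    simp only [heedef]; rw [Real.exp_neg]
  rw [hΨ_eq w hwmem, hEexp, hψw]
  have heene : (ee w) ≠ 0 := (hee_pos w).ne'
  simp only [Pi.mul_apply, ← hwdef, ← hg0def, hEexp]
  field_simp
  ring
end

section
/- Let (x, c, η) with x ≥ 0, c ≥ 0, η ≥ 0 satisfy η < H(F⁻¹(x, c)). Then the partial derivative of G with respect to its third argument exists at (x, c, η) and equals ∂G/∂η (x, c, η) = − φ(G(x, c, η)). -/
open MeasureTheory

/-- If `x ≥ 0`, `c ≥ 0`, `η ≥ 0` and `η < H(F⁻¹(x, c))`, then the partial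
derivative of `G` with respect to its third argument exists at `(x, c, η)` and equals
`∂G/∂η (x, c, η) = − φ(G(x, c, η))`. -/
theorem stmt_7 (D : ℝ) (hD : 0 ≤ D) (φ ψ : ℝ → ℝ)
    (hφc : ContinuousOn φ (Set.Ici D)) (hφpos : ∀ r ∈ Set.Ici D, 0 < φ r)
    (hψc : ContinuousOn ψ (Set.Ici D)) (hψnn : ∀ r ∈ Set.Ici D, 0 ≤ ψ r)
    (x c η : ℝ) (hx : 0 ≤ x) (hc : 0 ≤ c) (hη : 0 ≤ η)
    (hlt : η < Hfun D φ (Finv D ψ x c)) :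
    HasDerivAt (fun u => Gfun D φ ψ x c u) (-(φ (Gfun D φ ψ x c η))) η := by

  -- continuity of 1/φ on Ici D
  have hinv_cont : ContinuousOn (fun r => 1 / φ r) (Set.Ici D) :=
    continuousOn_const.div hφc (fun r hr => (hφpos r hr).ne')
  have huIcc : ∀ a b : ℝ, D ≤ a → D ≤ b → Set.uIcc a b ⊆ Set.Ici D := by
    intro a b ha hb r hr
    exact le_trans (le_min ha hb) hr.1
  have hint : ∀ a b : ℝ, D ≤ a → D ≤ b →
      IntervalIntegrable (fun r => 1 / φ r) volume a b :=
    fun a b ha hb => (hinv_cont.mono (huIcc a b ha hb)).intervalIntegrable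
  -- H strictly monotone on Ici D
  have hHmono : StrictMonoOn (Hfun D φ) (Set.Ici D) := by
    intro a ha b hb hab
    have hpos : 0 < ∫ r in a..b, 1 / φ r :=
      intervalIntegral.intervalIntegral_pos_of_pos_on (hint a b ha hb)
        (fun r hr => one_div_pos.2 (hφpos r (le_trans ha hr.1.le))) hab
    have hadd := intervalIntegral.integral_add_adjacent_intervals
      (hint D a le_rfl ha) (hint a b ha hb)
    have : Hfun D φ b = Hfun D φ a + ∫ r in a..b, 1 / φ r := by
      rw [Hfun, Hfun, ← hadd]
    linarith
  have hHD : Hfun D φ D = 0 := intervalIntegral.integral_same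
  -- H continuous on compact intervals
  have hHcont : ∀ T : ℝ, D ≤ T → ContinuousOn (Hfun D φ) (Set.Icc D T) := by
    intro T hT
    have h1 : IntegrableOn (fun r => 1 / φ r) (Set.uIcc D T) volume := by
      rw [Set.uIcc_of_le hT]
      exact (hinv_cont.mono (by intro r hr; exact hr.1)).integrableOn_Icc
    have := intervalIntegral.continuousOn_primitive_interval h1
    rwa [Set.uIcc_of_le hT] at this
  -- b := Finv x c lies in Ici D
  have hFD : Ffun D ψ D c = 0 := intervalIntegral.integral_same
  -- integrand of F is continuous and ≥ 1 on [D, T]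
  have hbD : D ≤ Finv D ψ x c := by
    set T : ℝ := x + D with hT
    have hDT : D ≤ T := by linarith
    have hinner : ContinuousOn (fun t => ∫ r in D..t, ψ r) (Set.Icc D T) := by
      have h1 : IntegrableOn ψ (Set.uIcc D T) volume := by
        rw [Set.uIcc_of_le hDT]
        exact (hψc.mono (by intro r hr; exact hr.1)).integrableOn_Icc
      have := intervalIntegral.continuousOn_primitive_interval h1
      rwa [Set.uIcc_of_le hDT] at this
    have hgc : ContinuousOn (fun t => Real.exp (c * ∫ r in D..t, ψ r)) (Set.Icc D T) :=
      Real.continuous_exp.comp_continuousOn (continuousOn_const.mul hinner)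
    have hFcont : ContinuousOn (fun z => Ffun D ψ z c) (Set.Icc D T) := by
      have h1 : IntegrableOn (fun t => Real.exp (c * ∫ r in D..t, ψ r))
          (Set.uIcc D T) volume := by
        rw [Set.uIcc_of_le hDT]; exact hgc.integrableOn_Icc
      have := intervalIntegral.continuousOn_primitive_interval h1
      rwa [Set.uIcc_of_le hDT] at this
    have hge1 : ∀ t ∈ Set.Icc D T, (1 : ℝ) ≤ Real.exp (c * ∫ r in D..t, ψ r) := by
      intro t ht
      have hψint : 0 ≤ ∫ r in D..t, ψ r :=
        intervalIntegral.integral_nonneg ht.1 (fun r hr => hψnn r hr.1)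
      have : 0 ≤ c * ∫ r in D..t, ψ r := mul_nonneg hc hψint
      simpa using Real.exp_le_exp.2 this
    have hFT : x ≤ Ffun D ψ T c := by
      have hgint : IntervalIntegrable (fun t => Real.exp (c * ∫ r in D..t, ψ r))
          volume D T := by
        apply ContinuousOn.intervalIntegrable
        rwa [Set.uIcc_of_le hDT]
      have h1 : (∫ t in D..T, (1 : ℝ)) ≤ Ffun D ψ T c :=
        intervalIntegral.integral_mono_on hDT intervalIntegrable_const hgint hge1
      have h2 : (∫ t in D..T, (1 : ℝ)) = T - D := by simp
      rw [h2] at h1; linarith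
    have : x ∈ Set.Icc (Ffun D ψ D c) (Ffun D ψ T c) := by
      rw [hFD]; exact ⟨hx, hFT⟩
    obtain ⟨b0, hb0, hFb0⟩ := intermediate_value_Icc hDT hFcont this
    exact (Function.invFunOn_mem ⟨b0, hb0.1, hFb0⟩ : Finv D ψ x c ∈ Set.Ici D)
  set b : ℝ := Finv D ψ x c with hbdef
  set y₀ : ℝ := Hfun D φ b - η with hy₀def
  have hy₀pos : 0 < y₀ := by simp only [hy₀def]; linarith
  have hy₀le : y₀ ≤ Hfun D φ b := by simp only [hy₀def]; linarith
  set b1 : ℝ := b + 1 with hb1def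
  have hb1D : D ≤ b1 := by linarith
  have hbb1 : Hfun D φ b < Hfun D φ b1 := hHmono hbD hb1D (by linarith)
  have hy₀lt : y₀ < Hfun D φ b1 := lt_of_le_of_lt hy₀le hbb1
  -- key: for y ∈ (0, H b1), Hinv y ∈ Ici D and H (Hinv y) = y
  have key : ∀ y ∈ Set.Ioo (0:ℝ) (Hfun D φ b1),
      Hinv D φ y ∈ Set.Ici D ∧ Hfun D φ (Hinv D φ y) = y := by
    intro y hy
    have hmem : y ∈ Set.Icc (Hfun D φ D) (Hfun D φ b1) := by
      rw [hHD]; exact ⟨hy.1.le, hy.2.le⟩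
    obtain ⟨z, hz, hHz⟩ := intermediate_value_Icc hb1D (hHcont b1 hb1D) hmem
    exact ⟨Function.invFunOn_mem ⟨z, hz.1, hHz⟩, Function.invFunOn_eq ⟨z, hz.1, hHz⟩⟩
  have hy₀Ioo : y₀ ∈ Set.Ioo (0:ℝ) (Hfun D φ b1) := ⟨hy₀pos, hy₀lt⟩
  obtain ⟨hz₀D, hHz₀⟩ := key y₀ hy₀Ioo
  set z₀ : ℝ := Hinv D φ y₀ with hz₀def
  have hz₀gt : D < z₀ := by
    rcases lt_or_eq_of_le (show D ≤ z₀ from hz₀D) with h | h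
    · exact h
    · exfalso; rw [← h, hHD] at hHz₀; linarith
  have hz₀lt : z₀ < b1 := by
    by_contra h
    push_neg at h
    have := hHmono.monotoneOn hb1D hz₀D h
    rw [hHz₀] at this; linarith
  -- continuity of Hinv at y₀
  have hcat : ContinuousAt (Hinv D φ) y₀ := by
    rw [ContinuousAt]
    rw [show Hinv D φ y₀ = z₀ from rfl]
    rw [tendsto_order]
    constructor
    · intro l hl
      set l' : ℝ := max l D with hl'def
      have hl'D : D ≤ l' := le_max_right l D
      have hl'lt : l' < z₀ := max_lt hl hz₀gt
      have h1 : Hfun D φ l' < y₀ := by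
        have := hHmono hl'D hz₀D hl'lt
        rwa [hHz₀] at this
      have h2 : (0:ℝ) ≤ Hfun D φ l' := by
        have := hHmono.monotoneOn (Set.self_mem_Ici) hl'D hl'D
        rwa [hHD] at this
      filter_upwards [Ioo_mem_nhds h1 hy₀lt] with y hy
      have hyIoo : y ∈ Set.Ioo (0:ℝ) (Hfun D φ b1) := ⟨lt_of_le_of_lt h2 hy.1, hy.2⟩
      obtain ⟨hyD, hHy⟩ := key y hyIoo
      have : l' < Hinv D φ y := by
        by_contra hcon
        push_neg at hcon
        have := hHmono.monotoneOn hyD hl'D hcon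
        rw [hHy] at this; linarith [hy.1]
      exact lt_of_le_of_lt (le_max_left l D) this
    · intro u hu
      set u' : ℝ := min u b1 with hu'def
      have hz₀u' : z₀ < u' := lt_min hu hz₀lt
      have hu'D : D ≤ u' := le_trans hz₀D hz₀u'.le
      have h1 : y₀ < Hfun D φ u' := by
        have := hHmono hz₀D hu'D hz₀u'
        rwa [hHz₀] at this
      have h2 : Hfun D φ u' ≤ Hfun D φ b1 :=
        hHmono.monotoneOn hu'D hb1D (min_le_right u b1)
      filter_upwards [Ioo_mem_nhds hy₀pos h1] with y hy
      have hyIoo : y ∈ Set.Ioo (0:ℝ) (Hfun D φ b1) := ⟨hy.1, lt_of_lt_of_le hy.2 h2⟩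
      obtain ⟨hyD, hHy⟩ := key y hyIoo
      have : Hinv D φ y < u' := by
        by_contra hcon
        push_neg at hcon
        have := hHmono.monotoneOn hu'D hyD hcon
        rw [hHy] at this; linarith [hy.2]
      exact lt_of_lt_of_le this (min_le_left u b1)
  -- derivative of H at z₀
  have hca : ContinuousAt (fun r => 1 / φ r) z₀ :=
    hinv_cont.continuousAt (Ici_mem_nhds hz₀gt)
  have hmeas : StronglyMeasurableAtFilter (fun r => 1 / φ r) (nhds z₀) volume :=
    ContinuousOn.stronglyMeasurableAtFilter isOpen_Ioi
      (hinv_cont.mono Set.Ioi_subset_Ici_self) z₀ hz₀gt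
  have hHder : HasDerivAt (Hfun D φ) (1 / φ z₀) z₀ :=
    intervalIntegral.integral_hasDerivAt_right (hint D z₀ le_rfl hz₀D)
      hmeas hca
  have hφz₀ : 0 < φ z₀ := hφpos z₀ hz₀D
  have hf' : (1 / φ z₀) ≠ 0 := by positivity
  have hfg : ∀ᶠ y in nhds y₀, Hfun D φ (Hinv D φ y) = y := by
    filter_upwards [Ioo_mem_nhds hy₀pos hy₀lt] with y hy
    exact (key y hy).2
  have hHder' : HasDerivAt (Hfun D φ) (1 / φ z₀) (Hinv D φ y₀) := hHder
  have hgder : HasDerivAt (Hinv D φ) (1 / φ z₀)⁻¹ y₀ :=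
    HasDerivAt.of_local_left_inverse hcat hHder' hf' hfg
  -- conclude
  have hlin : HasDerivAt (fun u : ℝ => Hfun D φ b - u) (-1) η :=
    (hasDerivAt_id η).const_sub (Hfun D φ b)
  have hcomp : HasDerivAt (fun u => Hinv D φ (Hfun D φ b - u)) ((1 / φ z₀)⁻¹ * (-1)) η := by
    have : Hfun D φ b - η = y₀ := rfl
    exact HasDerivAt.comp η (this ▸ hgder) hlin
  have heq : Gfun D φ ψ x c η = z₀ := rfl
  have : (1 / φ z₀)⁻¹ * (-1) = -(φ (Gfun D φ ψ x c η)) := by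
    rw [heq, one_div, inv_inv]; ring
  rw [← this]
  exact hcomp
end

section
/- Let D ≥ 0, let φ : [D, ∞) → ℝ be continuous and strictly positive, H(x) = ∫_D^x dr/φ(r), I = ∫_D^∞ dr/φ(r), and let H⁻¹ : [0, I) → [D, ∞) be the inverse of H. Fix T > 0, let η : [0, T] → ℝ be continuous and nondecreasing with η(0) = 0, and let a ≥ 0 satisfy η(T) ≤ a < I. Define x_t = H⁻¹(a − η(t)) for t ∈ [0, T]. Then x is continuous with values in [D, ∞), and for every t ∈ [0, T], x_t = H⁻¹(a − η(T)) + ∫_{(t, T]} φ(x_s) dη(s), where the integral is the Lebesgue–Stieltjes integral with respect to the measure induced by η on [0, T]. -/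
open MeasureTheory Set Filter

section Aux

variable {D : ℝ} {φ : ℝ → ℝ}

lemma invφ_cont (hφc : ContinuousOn φ (Set.Ici D)) (hφpos : ∀ r ∈ Set.Ici D, 0 < φ r) :
    ContinuousOn (fun r => 1 / φ r) (Set.Ici D) :=
  continuousOn_const.div hφc fun r hr => (hφpos r hr).ne'

lemma intInt (hφc : ContinuousOn φ (Set.Ici D)) (hφpos : ∀ r ∈ Set.Ici D, 0 < φ r)
    {x y : ℝ} (hx : D ≤ x) (hy : D ≤ y) :
    IntervalIntegrable (fun r => 1 / φ r) volume x y :=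
  ((invφ_cont hφc hφpos).mono (fun z hz => ((le_inf hx hy).trans hz.1 : D ≤ z))).intervalIntegrable

end Aux

lemma Hfun_D : Hfun D φ D = 0 := intervalIntegral.integral_same

lemma Hfun_strictMono (hφc : ContinuousOn φ (Set.Ici D)) (hφpos : ∀ r ∈ Set.Ici D, 0 < φ r) :
    StrictMonoOn (Hfun D φ) (Set.Ici D) := by
  intro x hx y hy hxy
  have key : Hfun D φ x + ∫ r in x..y, 1 / φ r = Hfun D φ y :=
    intervalIntegral.integral_add_adjacent_intervals (intInt hφc hφpos le_rfl hx)
      (intInt hφc hφpos hx hy)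
  have hpos : 0 < ∫ r in x..y, 1 / φ r := by
    apply intervalIntegral.intervalIntegral_pos_of_pos_on (intInt hφc hφpos hx hy)
    · intro z hz
      exact one_div_pos.2 (hφpos z (hx.trans hz.1.le))
    · exact hxy
  linarith

lemma Hfun_cont (hφc : ContinuousOn φ (Set.Ici D)) (hφpos : ∀ r ∈ Set.Ici D, 0 < φ r) :
    ContinuousOn (Hfun D φ) (Set.Ici D) := by
  intro x hx
  have h1 : ContinuousOn (Hfun D φ) (Set.uIcc D (x + 1)) := by
    apply intervalIntegral.continuousOn_primitive_interval
    apply ((invφ_cont hφc hφpos).mono ?_).integrableOn_compact isCompact_uIcc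
    exact fun z hz => (le_inf le_rfl (by linarith [hx.out])).trans hz.1
  have hu : Set.uIcc D (x + 1) = Set.Icc D (x + 1) := Set.uIcc_of_le (by linarith [hx.out])
  have h2 : Set.Icc D (x + 1) ∈ nhdsWithin x (Set.Ici D) := by
    rw [← Set.Ici_inter_Iic]
    exact Filter.inter_mem self_mem_nhdsWithin
      (mem_nhdsWithin_of_mem_nhds (Iic_mem_nhds (by linarith [hx.out])))
  exact (h1 x (by rw [hu]; exact ⟨hx.out, by linarith⟩)).mono_of_mem_nhdsWithin (by rw [hu] at h1 ⊢; exact h2)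

lemma exists_b (hφc : ContinuousOn φ (Set.Ici D)) (hφpos : ∀ r ∈ Set.Ici D, 0 < φ r)
    {a : ℝ} (haI : ENNReal.ofReal a < ∫⁻ r in Set.Ici D, ENNReal.ofReal (1 / φ r)) :
    ∃ b, D ≤ b ∧ a < Hfun D φ b := by
  by_contra h
  push_neg at h
  refine absurd haI (not_lt.2 ?_)
  set F : ℝ → ENNReal := fun r => ENNReal.ofReal (1 / φ r) with hF
  have key : ∀ n : ℕ, ∫⁻ r in Set.Icc D (D + n), F r ≤ ENNReal.ofReal a := by
    intro n
    have hDn : D ≤ D + n := by linarith [Nat.cast_nonneg (α := ℝ) n]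
    have hint : IntegrableOn (fun r => 1 / φ r) (Set.Icc D (D + n)) :=
      ((invφ_cont hφc hφpos).mono Set.Icc_subset_Ici_self).integrableOn_compact isCompact_Icc
    have hnn : 0 ≤ᵐ[volume.restrict (Set.Icc D (D + n))] fun r => 1 / φ r := by
      refine (ae_restrict_iff' measurableSet_Icc).2 (Filter.Eventually.of_forall fun r hr => ?_)
      exact (one_div_pos.2 (hφpos r hr.1)).le
    rw [hF, ← ofReal_integral_eq_lintegral_ofReal hint hnn]
    apply ENNReal.ofReal_le_ofReal
    have heq : ∫ r in Set.Icc D (D + n), 1 / φ r = Hfun D φ (D + n) := by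
      rw [Hfun, intervalIntegral.integral_of_le hDn, ← integral_Icc_eq_integral_Ioc]
    rw [heq]
    exact h _ hDn
  have repr : ∫⁻ r in Set.Ici D, F r
      = ⨆ n : ℕ, ∫⁻ r in Set.Icc D (D + n), F r := by
    rw [← lintegral_indicator measurableSet_Ici]
    have hpt : ∀ x, (Set.Ici D).indicator F x
        = ⨆ n : ℕ, (Set.Icc D (D + n)).indicator F x := by
      intro x
      by_cases hx : D ≤ x
      · rw [Set.indicator_of_mem (Set.mem_Ici.mpr hx)]
        refine le_antisymm ?_ ?_
        · refine le_iSup_of_le ⌈x - D⌉₊ ?_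
          rw [Set.indicator_of_mem (show x ∈ Set.Icc D (D + (⌈x - D⌉₊ : ℕ)) from
            ⟨hx, by linarith [Nat.le_ceil (x - D)]⟩)]
        · refine iSup_le fun n => ?_
          by_cases hm : x ∈ Set.Icc D (D + n)
          · rw [Set.indicator_of_mem hm]
          · rw [Set.indicator_of_notMem hm]; exact zero_le
      · have hz : ∀ n : ℕ, (Set.Icc D (D + n)).indicator F x = 0 :=
          fun n => Set.indicator_of_notMem (fun hm => hx hm.1) _
        simp [Set.indicator_of_notMem (fun hm => hx (Set.mem_Ici.mp hm)), hz]
    calc ∫⁻ x, (Set.Ici D).indicator F x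
        = ∫⁻ x, ⨆ n : ℕ, (Set.Icc D (D + n)).indicator F x := by
          congr 1; funext x; exact hpt x
      _ = ⨆ n : ℕ, ∫⁻ x, (Set.Icc D (D + n)).indicator F x := by
          apply lintegral_iSup'
          · intro n
            refine (aemeasurable_indicator_iff measurableSet_Icc).2 ?_
            exact (((invφ_cont hφc hφpos).mono Set.Icc_subset_Ici_self).aemeasurable
              measurableSet_Icc).ennreal_ofReal
          · refine Filter.Eventually.of_forall fun x => ?_
            intro n m hnm
            refine Set.indicator_le_indicator_of_subset (Set.Icc_subset_Icc_right ?_)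
              (fun r => zero_le) x
            have : (n : ℝ) ≤ m := Nat.cast_le.2 hnm
            linarith
      _ = ⨆ n : ℕ, ∫⁻ r in Set.Icc D (D + n), F r := by
          simp_rw [lintegral_indicator measurableSet_Icc]
  rw [repr]
  exact iSup_le key

lemma leftLim_eq_self {η : StieltjesFunction ℝ} (hηc : Continuous η) (x : ℝ) :
    Function.leftLim η x = η x :=
  leftLim_eq_of_tendsto
    ((hηc.tendsto x).mono_left nhdsWithin_le_nhds)

lemma stieltjes_preimage (η : StieltjesFunction ℝ) (hηc : Continuous η) {t T c d : ℝ}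
    (htT : t ≤ T) :
    η.measure (η ⁻¹' Set.Ioc c d ∩ Set.Ioc t T)
      = ENNReal.ofReal (min d (η T) - max c (η t)) := by
  by_cases h1 : d < η t
  · have hA : η ⁻¹' Set.Ioc c d ∩ Set.Ioc t T = ∅ := by
      ext s
      simp only [Set.mem_inter_iff, Set.mem_preimage, Set.mem_Ioc, Set.mem_empty_iff_false,
        iff_false, not_and, and_imp]
      intro _ hd ht _
      exact absurd (hd.trans_lt (lt_of_lt_of_le h1 (η.mono ht.le))) (lt_irrefl _)
    rw [hA]
    simp only [measure_empty]
    symm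
    rw [ENNReal.ofReal_eq_zero]
    have := min_le_left d (η T)
    have := le_max_right c (η t)
    linarith
  by_cases h2 : η T ≤ c
  · have hA : η ⁻¹' Set.Ioc c d ∩ Set.Ioc t T = ∅ := by
      ext s
      simp only [Set.mem_inter_iff, Set.mem_preimage, Set.mem_Ioc, Set.mem_empty_iff_false,
        iff_false, not_and, and_imp]
      intro hc _ _ hsT
      have := η.mono hsT
      linarith
    rw [hA]
    simp only [measure_empty]
    symm
    rw [ENNReal.ofReal_eq_zero]
    have := min_le_right d (η T)
    have := le_max_left c (η t)
    linarith
  push_neg at h1 h2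
  set S := Set.Icc t T ∩ η ⁻¹' Set.Iic d with hS
  set U := Set.Icc t T ∩ η ⁻¹' Set.Ioi c with hU
  have hSne : t ∈ S := ⟨⟨le_rfl, htT⟩, h1⟩
  have hSbdd : BddAbove S := (BddAbove.mono Set.inter_subset_left) (bddAbove_Icc)
  have hSclosed : IsClosed S := isClosed_Icc.inter (isClosed_Iic.preimage hηc)
  set β := sSup S with hβ
  have hβmem : β ∈ S := hSclosed.csSup_mem ⟨t, hSne⟩ hSbdd
  have hUne : T ∈ U := ⟨⟨htT, le_rfl⟩, h2⟩
  have hUbdd : BddBelow U := ⟨t, fun u hu => hu.1.1⟩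
  set α := sInf U with hα
  have hαt : t ≤ α := le_csInf ⟨T, hUne⟩ fun u hu => hu.1.1
  have hαT : α ≤ T := csInf_le hUbdd hUne
  set A := η ⁻¹' Set.Ioc c d ∩ Set.Ioc t T with hA
  have hA1 : A ⊆ Set.Icc α β := by
    rintro s ⟨⟨hc', hd'⟩, hs1, hs2⟩
    exact ⟨csInf_le hUbdd ⟨⟨hs1.le, hs2⟩, hc'⟩, le_csSup hSbdd ⟨⟨hs1.le, hs2⟩, hd'⟩⟩
  have hA2 : Set.Ioo α β ⊆ A := by
    rintro s ⟨hs1, hs2⟩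
    obtain ⟨u, hu, hus⟩ := exists_lt_of_csInf_lt ⟨T, hUne⟩ hs1
    obtain ⟨v, hv, hsv⟩ := exists_lt_of_lt_csSup ⟨t, hSne⟩ hs2
    refine ⟨⟨lt_of_lt_of_le hu.2 (η.mono hus.le), le_trans (η.mono hsv.le) hv.2⟩,
      lt_of_le_of_lt hαt hs1, le_trans hs2.le hβmem.1.2⟩
  have m1 : η.measure (Set.Ioo α β) = ENNReal.ofReal (η β - η α) := by
    rw [η.measure_Ioo, leftLim_eq_self hηc]
  have m2 : η.measure (Set.Icc α β) = ENNReal.ofReal (η β - η α) := by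
    rw [η.measure_Icc, leftLim_eq_self hηc]
  have hAmeas : η.measure A = ENNReal.ofReal (η β - η α) :=
    le_antisymm ((measure_mono hA1).trans_eq m2) (m1 ▸ measure_mono hA2)
  have hηβ : η β = min d (η T) := by
    rcases eq_or_lt_of_le hβmem.1.2 with hβT | hβT
    · rw [hβT, min_eq_right]
      rw [← hβT]; exact hβmem.2
    · have hβd : η β = d := by
        refine le_antisymm hβmem.2 ?_
        by_contra hlt
        push_neg at hlt
        have h3 : ∀ᶠ s in nhdsWithin β (Set.Ioi β), η s < d :=
          ((hηc.tendsto β).mono_left nhdsWithin_le_nhds).eventually_lt_const hlt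
        have h4 : Set.Ioc β T ∈ nhdsWithin β (Set.Ioi β) :=
          Ioc_mem_nhdsGT_of_mem ⟨le_rfl, hβT⟩
        obtain ⟨s, hsd, hsβ⟩ := (h3.and (Filter.eventually_mem_set.2 h4)).exists
        have hsS : s ∈ S := ⟨⟨hβmem.1.1.trans hsβ.1.le, hsβ.2⟩, hsd.le⟩
        exact absurd (le_csSup hSbdd hsS) (not_le.2 hsβ.1)
      rw [hβd, min_eq_left]
      by_contra hTd
      push_neg at hTd
      have : T ∈ S := ⟨⟨htT, le_rfl⟩, hTd.le⟩
      exact absurd (le_csSup hSbdd this) (not_le.2 hβT)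
  have hηα : η α = max c (η t) := by
    have hge1 : η t ≤ η α := η.mono hαt
    have hge2 : c ≤ η α := by
      by_contra hlt
      push_neg at hlt
      have h3 : ∀ᶠ s in nhds α, η s < c := (hηc.tendsto α).eventually_lt_const hlt
      obtain ⟨δ, hδ, hball⟩ := Metric.eventually_nhds_iff.mp h3
      obtain ⟨u, huU, hu⟩ := exists_lt_of_csInf_lt ⟨T, hUne⟩
        (show sInf U < α + δ by rw [← hα]; linarith)
      have hαu : α ≤ u := csInf_le hUbdd huU
      have : η u < c := hball (by rw [Real.dist_eq, abs_of_nonneg (by linarith)]; linarith)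
      exact absurd huU.2 (not_lt.2 this.le)
    have hle : η α ≤ max c (η t) := by
      rcases eq_or_lt_of_le hαt with hta | hta
      · rw [← hta]; exact le_max_right _ _
      rcases le_or_gt (η α) c with hc | hc
      · exact hc.trans (le_max_left _ _)
      exfalso
      have h3 : ∀ᶠ s in nhdsWithin α (Set.Iio α), c < η s :=
        ((hηc.tendsto α).mono_left nhdsWithin_le_nhds).eventually_const_lt hc
      have h4 : Set.Ioo t α ∈ nhdsWithin α (Set.Iio α) :=
        Ioo_mem_nhdsLT_of_mem ⟨hta, le_rfl⟩
      obtain ⟨s, hsc, hst, hsα⟩ := (h3.and h4).exists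
      have : s ∈ U := ⟨⟨hst.le, hsα.le.trans hαT⟩, hsc⟩
      exact absurd (csInf_le hUbdd this) (not_le.2 hsα)
    exact le_antisymm hle (max_le hge2 hge1)
  rw [hAmeas, hηβ, hηα]

lemma stieltjes_map (η : StieltjesFunction ℝ) (hηc : Continuous η) {t T : ℝ} (htT : t ≤ T) :
    Measure.map η (η.measure.restrict (Set.Ioc t T))
      = volume.restrict (Set.Ioc (η t) (η T)) := by
  refine MeasureTheory.Measure.ext_of_Ioc' _ _ (fun c d _ => ?_) (fun c d _ => ?_)
  · rw [Measure.map_apply hηc.measurable measurableSet_Ioc,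
      Measure.restrict_apply (hηc.measurable measurableSet_Ioc)]
    exact ((measure_mono Set.inter_subset_right).trans_lt
      (by rw [η.measure_Ioc]; exact ENNReal.ofReal_lt_top)).ne
  · rw [Measure.map_apply hηc.measurable measurableSet_Ioc,
      Measure.restrict_apply (hηc.measurable measurableSet_Ioc),
      Measure.restrict_apply measurableSet_Ioc,
      stieltjes_preimage η hηc htT, Set.Ioc_inter_Ioc, Real.volume_Ioc]

/-- Let `D ≥ 0`, `φ` continuous and positive on `[D, ∞)`, `H(x) = ∫_D^x dr/φ(r)`,
`I = ∫_D^∞ dr/φ(r)` and `H⁻¹` the inverse of `H`. Let `T > 0`, let `η` be a continuous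
nondecreasing (Stieltjes) function with `η 0 = 0`, and let `a ≥ 0` satisfy `η T ≤ a < I`.
Then `x_t = H⁻¹(a − η t)` is continuous on `[0, T]` with values in `[D, ∞)`, and for every
`t ∈ [0, T]`, `x_t = H⁻¹(a − η T) + ∫_{(t, T]} φ(x_s) dη(s)` (a Lebesgue–Stieltjes integral). -/
theorem stmt_9 (D : ℝ) (hD : 0 ≤ D) (φ : ℝ → ℝ)
    (hφc : ContinuousOn φ (Set.Ici D)) (hφpos : ∀ r ∈ Set.Ici D, 0 < φ r)
    (T : ℝ) (hT : 0 < T)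
    (η : StieltjesFunction ℝ) (hηc : Continuous η) (hη0 : η 0 = 0)
    (a : ℝ) (ha : 0 ≤ a) (haT : η T ≤ a)
    (haI : ENNReal.ofReal a < ∫⁻ r in Set.Ici D, ENNReal.ofReal (1 / φ r)) :
    ContinuousOn (fun t => Hinv D φ (a - η t)) (Set.Icc 0 T) ∧
    (∀ t ∈ Set.Icc 0 T, Hinv D φ (a - η t) ∈ Set.Ici D) ∧
    ∀ t ∈ Set.Icc 0 T,
      Hinv D φ (a - η t) =
        Hinv D φ (a - η T) +
          ∫ s in Set.Ioc t T, φ (Hinv D φ (a - η s)) ∂η.measure := by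
  obtain ⟨b, hDb, hab⟩ := exists_b hφc hφpos haI
  have hHc : ContinuousOn (Hfun D φ) (Set.Ici D) := Hfun_cont hφc hφpos
  have hHm : StrictMonoOn (Hfun D φ) (Set.Ici D) := Hfun_strictMono hφc hφpos
  have hHD : Hfun D φ D = 0 := Hfun_D
  have hsub : Set.Icc 0 (Hfun D φ b) ⊆ Hfun D φ '' Set.Icc D b := by
    rw [← hHD]
    exact intermediate_value_Icc hDb (hHc.mono Set.Icc_subset_Ici_self)
  have hinj : Set.InjOn (Hfun D φ) (Set.Ici D) := hHm.injOn
  have hHinvH : ∀ x ∈ Set.Ici D, Hinv D φ (Hfun D φ x) = x := fun x hx =>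
    hinj.leftInvOn_invFunOn hx
  have hmemb : ∀ y ∈ Set.Icc 0 (Hfun D φ b),
      Hinv D φ y ∈ Set.Icc D b ∧ Hfun D φ (Hinv D φ y) = y := by
    intro y hy
    obtain ⟨x, hx, rfl⟩ := hsub hy
    rw [hHinvH x (Set.Icc_subset_Ici_self hx)]
    exact ⟨hx, rfl⟩
  have hIccIcc : Set.Icc (0:ℝ) a ⊆ Set.Icc 0 (Hfun D φ b) := Set.Icc_subset_Icc_right hab.le
  have hHinvMono : StrictMonoOn (Hinv D φ) (Set.Icc 0 (Hfun D φ b)) := by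
    intro y1 h1 y2 h2 h12
    obtain ⟨m1, e1⟩ := hmemb y1 h1
    obtain ⟨m2, e2⟩ := hmemb y2 h2
    refine (hHm.lt_iff_lt (Set.Icc_subset_Ici_self m1) (Set.Icc_subset_Ici_self m2)).1 ?_
    rw [e1, e2]; exact h12
  have hD_lt_Hinv : ∀ y ∈ Set.Icc 0 (Hfun D φ b), 0 < y → D < Hinv D φ y := by
    intro y hy hy0
    obtain ⟨hmem, heq⟩ := hmemb y hy
    refine (hHm.lt_iff_lt Set.self_mem_Ici (Set.Icc_subset_Ici_self hmem)).1 ?_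
    rw [heq, hHD]; exact hy0
  have hHinv_lt_b : ∀ y ∈ Set.Icc 0 a, Hinv D φ y < b := by
    intro y hy
    obtain ⟨hmem, heq⟩ := hmemb y (hIccIcc hy)
    refine (hHm.lt_iff_lt (Set.Icc_subset_Ici_self hmem) (Set.mem_Ici.2 hDb)).1 ?_
    rw [heq]; exact lt_of_le_of_lt hy.2 hab
  have hHinvCont : ContinuousOn (Hinv D φ) (Set.Icc 0 a) := by
    intro y hy
    have hyHb : y < Hfun D φ b := lt_of_le_of_lt hy.2 hab
    have hright : ContinuousWithinAt (Hinv D φ) (Set.Ici y) y := by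
      refine hHinvMono.continuousWithinAt_right_of_exists_between ?_ ?_
      · exact Filter.mem_of_superset (Ico_mem_nhdsGE_of_mem ⟨le_rfl, hyHb⟩)
          fun z hz => ⟨hy.1.trans hz.1, hz.2.le⟩
      · intro z hz
        have hyb : Hinv D φ y < b := hHinv_lt_b y hy
        have hww : Hinv D φ y < min z b := lt_min hz hyb
        have hwD : D ≤ min z b := ((hmemb y (hIccIcc hy)).1.1).trans hww.le
        refine ⟨Hfun D φ (min z b), ⟨?_, ?_⟩, ?_⟩
        · rw [← hHD]; exact hHm.monotoneOn Set.self_mem_Ici hwD hwD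
        · exact hHm.monotoneOn hwD (Set.mem_Ici.2 hDb) (min_le_right _ _)
        · rw [hHinvH _ hwD]
          exact ⟨hww, min_le_left _ _⟩
    rcases eq_or_lt_of_le hy.1 with h0 | h0
    · exact hright.mono fun z hz => by rw [← h0]; exact hz.1
    · have hleft : ContinuousWithinAt (Hinv D φ) (Set.Iic y) y := by
        refine hHinvMono.continuousWithinAt_left_of_exists_between ?_ ?_
        · exact Filter.mem_of_superset (Ioc_mem_nhdsLE_of_mem ⟨h0, le_rfl⟩)
            fun z hz => ⟨hz.1.le, hz.2.trans (hy.2.trans hab.le)⟩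
        · intro z hz
          have hDy : D < Hinv D φ y := hD_lt_Hinv y (hIccIcc hy) h0
          have hwy : max z D < Hinv D φ y := max_lt hz hDy
          have hwD : D ≤ max z D := le_max_right _ _
          have hwb : max z D ≤ b := hwy.le.trans (hmemb y (hIccIcc hy)).1.2
          refine ⟨Hfun D φ (max z D), ⟨?_, ?_⟩, ?_⟩
          · rw [← hHD]; exact hHm.monotoneOn Set.self_mem_Ici hwD hwD
          · exact hHm.monotoneOn hwD (Set.mem_Ici.2 hDb) hwb
          · rw [hHinvH _ hwD]
            exact ⟨le_max_left _ _, hwy⟩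
      exact (hleft.union hright).mono fun z _ => by
        rcases le_total z y with h | h
        exacts [Or.inl h, Or.inr h]
  have hmapsTo : Set.MapsTo (fun s => a - η s) (Set.Icc 0 T) (Set.Icc 0 a) := by
    intro s hs
    have h1 : 0 ≤ η s := by rw [← hη0]; exact η.mono hs.1
    have h2 : η s ≤ a := (η.mono hs.2).trans haT
    show a - η s ∈ Set.Icc 0 a
    exact ⟨by linarith, by linarith⟩
  have hcont1 : ContinuousOn (fun t => Hinv D φ (a - η t)) (Set.Icc 0 T) :=
    hHinvCont.comp (continuous_const.sub hηc).continuousOn hmapsTo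
  have hval : ∀ t ∈ Set.Icc 0 T, Hinv D φ (a - η t) ∈ Set.Ici D := fun t ht =>
    (hmemb _ (hIccIcc (hmapsTo ht))).1.1
  refine ⟨hcont1, hval, ?_⟩
  have hder : ∀ v ∈ Set.Ioo (0:ℝ) a, HasDerivAt (Hinv D φ) (φ (Hinv D φ v)) v := by
    intro v hv
    have hvmem : v ∈ Set.Icc 0 (Hfun D φ b) := hIccIcc ⟨hv.1.le, hv.2.le⟩
    obtain ⟨hxmem, hxeq⟩ := hmemb v hvmem
    have hDx : D < Hinv D φ v := hD_lt_Hinv v hvmem hv.1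
    have hccAt : ContinuousAt (fun r => 1 / φ r) (Hinv D φ v) :=
      (invφ_cont hφc hφpos).continuousAt (Ici_mem_nhds hDx)
    have hH' : HasDerivAt (Hfun D φ) (1 / φ (Hinv D φ v)) (Hinv D φ v) :=
      intervalIntegral.integral_hasDerivAt_right
        (intInt hφc hφpos le_rfl hDx.le)
        ⟨Set.Ici D, Ici_mem_nhds hDx,
          (invφ_cont hφc hφpos).aestronglyMeasurable measurableSet_Ici⟩
        hccAt
    have hcontAtInv : ContinuousAt (Hinv D φ) v :=
      hHinvCont.continuousAt (Icc_mem_nhds hv.1 hv.2)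
    have hfg : ∀ᶠ y in nhds v, Hfun D φ (Hinv D φ y) = y := by
      filter_upwards [Ioo_mem_nhds hv.1 (hv.2.trans hab)] with y hy
      exact (hmemb y ⟨hy.1.le, hy.2.le⟩).2
    have hne : 1 / φ (Hinv D φ v) ≠ 0 :=
      one_div_ne_zero (hφpos _ hDx.le).ne'
    have hkey := HasDerivAt.of_local_left_inverse hcontAtInv hH' hne hfg
    rw [one_div, inv_inv] at hkey
    exact hkey
  intro t ht
  have hηt0 : 0 ≤ η t := by rw [← hη0]; exact η.mono ht.1
  have hηtT : η t ≤ η T := η.mono ht.2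
  have hp0 : 0 ≤ a - η T := by linarith
  have hpq : a - η T ≤ a - η t := by linarith
  have hqa : a - η t ≤ a := by linarith
  have hIccpq : Set.Icc (a - η T) (a - η t) ⊆ Set.Icc 0 a :=
    Set.Icc_subset_Icc hp0 hqa
  have hftc : ∫ v in (a - η T)..(a - η t), φ (Hinv D φ v)
      = Hinv D φ (a - η t) - Hinv D φ (a - η T) := by
    refine intervalIntegral.integral_eq_sub_of_hasDeriv_right_of_le hpq
      (hHinvCont.mono hIccpq)
      (fun v hv =>
        ((hder v ⟨lt_of_le_of_lt hp0 hv.1, lt_of_lt_of_le hv.2 hqa⟩).hasDerivWithinAt))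
      ?_
    apply ContinuousOn.intervalIntegrable
    rw [Set.uIcc_of_le hpq]
    exact hφc.comp (hHinvCont.mono hIccpq)
      fun v hv => (hmemb v (hIccIcc (hIccpq hv))).1.1
  have hg : ContinuousOn (fun u => φ (Hinv D φ (a - u))) (Set.Icc (η t) (η T)) := by
    refine hφc.comp ?_ ?_
    · refine hHinvCont.comp (continuous_const.sub continuous_id).continuousOn ?_
      intro u hu
      show a - u ∈ Set.Icc 0 a
      exact ⟨by linarith [hu.2], by linarith [hu.1]⟩
    · intro u hu
      exact (hmemb _ (hIccIcc ⟨by linarith [hu.2], by linarith [hu.1]⟩)).1.1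
  have hmap := stieltjes_map η hηc ht.2
  have hint1 : ∫ s in Set.Ioc t T, φ (Hinv D φ (a - η s)) ∂η.measure
      = ∫ u in Set.Ioc (η t) (η T), φ (Hinv D φ (a - u)) := by
    have hmeas2 : AEStronglyMeasurable (fun u => φ (Hinv D φ (a - u)))
        (Measure.map η (η.measure.restrict (Set.Ioc t T))) := by
      rw [hmap]
      exact (hg.mono Set.Ioc_subset_Icc_self).aestronglyMeasurable measurableSet_Ioc
    have := MeasureTheory.integral_map (μ := η.measure.restrict (Set.Ioc t T))
      hηc.measurable.aemeasurable hmeas2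
    rw [hmap] at this
    exact this.symm
  have hint3 : ∫ u in (η t)..(η T), φ (Hinv D φ (a - u))
      = ∫ v in (a - η T)..(a - η t), φ (Hinv D φ v) :=
    intervalIntegral.integral_comp_sub_left (fun v => φ (Hinv D φ v)) a
  rw [hint1, ← intervalIntegral.integral_of_le hηtT, hint3, hftc]
  ring
end

section
/- Fix K > 0 and T > 0, and let η : [0, T] → ℝ be continuous and nondecreasing with η(0) = 0. Define x_t = K · e^{−η(t)} for t ∈ [0, T]. Then for every t ∈ [0, T], x_t = K · e^{−η(T)} + ∫_{(t, T]} x_s dη(s), where the integral is the Lebesgue–Stieltjes integral with respect to the measure induced by η on [0, T]. -/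
open MeasureTheory

/-- For a continuous Stieltjes function and `t ≤ T`, each level `c` admits a cut point `u`
such that on `(t, T]`, `η s ≤ c ↔ s ≤ u`, and `η u` is the clamped value of `c`. -/
lemma stmt12_exists_cut (η : StieltjesFunction ℝ) (hc : Continuous η) {t T : ℝ} (htT : t ≤ T)
    (c : ℝ) :
    ∃ u ∈ Set.Icc t T, η u = max (η t) (min c (η T)) ∧
      ∀ s ∈ Set.Ioc t T, (η s ≤ c ↔ s ≤ u) := by
  rcases lt_or_ge c (η t) with h1 | h1
  · refine ⟨t, ⟨le_rfl, htT⟩, ?_, ?_⟩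
    · have : min c (η T) ≤ c := min_le_left _ _
      rw [max_eq_left (by linarith)]
    · intro s hs
      have h2 : η t ≤ η s := η.mono hs.1.le
      constructor
      · intro h; linarith
      · intro h; exact absurd (lt_of_lt_of_le hs.1 h) (lt_irrefl t)
  · rcases lt_or_ge (η T) c with h2 | h2
    · refine ⟨T, ⟨htT, le_rfl⟩, ?_, ?_⟩
      · rw [min_eq_right h2.le, max_eq_right (η.mono htT)]
      · intro s hs
        have : η s ≤ η T := η.mono hs.2
        constructor
        · intro _; exact hs.2
        · intro _; linarith
    · -- η t ≤ c ≤ η T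
      set S : Set ℝ := Set.Icc t T ∩ η ⁻¹' Set.Iic c with hS
      have hSne : S.Nonempty := ⟨t, ⟨le_rfl, htT⟩, h1⟩
      have hSbdd : BddAbove S := ⟨T, fun s hs => hs.1.2⟩
      have hSclosed : IsClosed S := isClosed_Icc.inter (isClosed_Iic.preimage hc)
      have huS : sSup S ∈ S := hSclosed.csSup_mem hSne hSbdd
      set u := sSup S with hu
      have huI : u ∈ Set.Icc t T := huS.1
      have huc : η u ≤ c := huS.2
      -- by IVT there is w with η w = c
      obtain ⟨w, hwI, hwc⟩ : ∃ w ∈ Set.Icc t T, η w = c := by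
        have := intermediate_value_Icc htT hc.continuousOn (a := t) (b := T)
        exact this ⟨h1, h2⟩
      have hwu : w ≤ u := le_csSup hSbdd ⟨hwI, hwc.le⟩
      have hcu : c ≤ η u := hwc ▸ η.mono hwu
      have hηu : η u = c := le_antisymm huc hcu
      refine ⟨u, huI, ?_, ?_⟩
      · rw [min_eq_left h2, max_eq_right h1, hηu]
      · intro s hs
        constructor
        · intro h; exact le_csSup hSbdd ⟨⟨hs.1.le, hs.2⟩, h⟩
        · intro h; calc η s ≤ η u := η.mono h
            _ = c := hηu

lemma stmt12_key (η : StieltjesFunction ℝ) (hc : Continuous η) {t T : ℝ} (htT : t ≤ T) (a b : ℝ) :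
    η.measure (Set.Ioc t T ∩ η ⁻¹' Set.Ioc a b)
      = ENNReal.ofReal (min b (η T) - max a (η t)) := by
  obtain ⟨u, huI, hua, hu⟩ := stmt12_exists_cut η hc htT a
  obtain ⟨v, hvI, hvb, hv⟩ := stmt12_exists_cut η hc htT b
  have hset : Set.Ioc t T ∩ η ⁻¹' Set.Ioc a b = Set.Ioc u v := by
    ext s
    simp only [Set.mem_inter_iff, Set.mem_preimage, Set.mem_Ioc]
    constructor
    · rintro ⟨hs, ha, hb⟩
      refine ⟨?_, (hv s ⟨hs.1, hs.2⟩).mp hb⟩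
      by_contra h
      push_neg at h
      exact absurd ((hu s ⟨hs.1, hs.2⟩).mpr h) (not_le.mpr ha)
    · rintro ⟨hus, hsv⟩
      have hsI : s ∈ Set.Ioc t T := ⟨lt_of_le_of_lt huI.1 hus, hsv.trans hvI.2⟩
      refine ⟨⟨hsI.1, hsI.2⟩, ?_, (hv s hsI).mpr hsv⟩
      by_contra h
      push_neg at h
      exact absurd ((hu s hsI).mp h) (not_le.mpr hus)
  rw [hset, η.measure_Ioc, hua, hvb]
  have hmono : η t ≤ η T := η.mono htT
  have key : ∀ x y : ℝ, (x = y ∨ (x ≤ 0 ∧ y ≤ 0)) →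
      ENNReal.ofReal x = ENNReal.ofReal y := by
    rintro x y (rfl | ⟨hx, hy⟩)
    · rfl
    · rw [ENNReal.ofReal_eq_zero.mpr hx, ENNReal.ofReal_eq_zero.mpr hy]
  apply key
  rcases le_total (max a (η t)) (min b (η T)) with h | h
  · left
    simp only [min_def, max_def] at *
    split_ifs at * <;> linarith
  · right
    constructor <;> (simp only [min_def, max_def] at *; split_ifs at * <;> linarith)

lemma stmt12_map (η : StieltjesFunction ℝ) (hc : Continuous η) {t T : ℝ} (htT : t ≤ T) :
    Measure.map η (η.measure.restrict (Set.Ioc t T))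
      = volume.restrict (Set.Ioc (η t) (η T)) := by
  have hmap : ∀ a b : ℝ, (Measure.map η (η.measure.restrict (Set.Ioc t T))) (Set.Ioc a b)
      = ENNReal.ofReal (min b (η T) - max a (η t)) := by
    intro a b
    rw [Measure.map_apply hc.measurable measurableSet_Ioc,
      Measure.restrict_apply (measurableSet_Ioc.preimage hc.measurable),
      Set.inter_comm, stmt12_key η hc htT a b]
  refine Measure.ext_of_Ioc' _ _ (fun a b _ => ?_) (fun a b _ => ?_)
  · rw [hmap a b]; exact ENNReal.ofReal_ne_top
  · rw [hmap a b, Measure.restrict_apply measurableSet_Ioc, Set.Ioc_inter_Ioc,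
      Real.volume_Ioc]

/-- Fix `K > 0`, `T > 0`, and a continuous nondecreasing (Stieltjes) function
`η` with `η 0 = 0`. Setting `x_t = K·e^{−η t}`, for every `t ∈ [0, T]` one has
`x_t = K·e^{−η T} + ∫_{(t, T]} x_s dη(s)` (a Lebesgue–Stieltjes integral with respect to the
measure induced by `η`). -/
theorem stmt_12 (K T : ℝ) (hK : 0 < K) (hT : 0 < T)
    (η : StieltjesFunction ℝ) (hηc : Continuous η) (hη0 : η 0 = 0) :
    ∀ t ∈ Set.Icc 0 T,
      K * Real.exp (-η t) =
        K * Real.exp (-η T) +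
          ∫ s in Set.Ioc t T, K * Real.exp (-η s) ∂η.measure := by
  intro t ht
  have htT : t ≤ T := ht.2
  have hint : ∫ s in Set.Ioc t T, K * Real.exp (-η s) ∂η.measure
      = ∫ x in Set.Ioc (η t) (η T), K * Real.exp (-x) := by
    have : ∫ s in Set.Ioc t T, K * Real.exp (-η s) ∂η.measure
        = ∫ x, K * Real.exp (-x) ∂(Measure.map η (η.measure.restrict (Set.Ioc t T))) := by
      rw [integral_map hηc.measurable.aemeasurable]
      exact (Continuous.aestronglyMeasurable (by continuity))
    rw [this, stmt12_map η hηc htT]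
  rw [hint]
  have hle : η t ≤ η T := η.mono htT
  have : ∫ x in Set.Ioc (η t) (η T), K * Real.exp (-x)
      = ∫ x in (η t)..(η T), K * Real.exp (-x) := by
    rw [intervalIntegral.integral_of_le hle]
  rw [this]
  have : ∫ x in (η t)..(η T), K * Real.exp (-x)
      = K * (Real.exp (-η t) - Real.exp (-η T)) := by
    rw [intervalIntegral.integral_const_mul]
    have := intervalIntegral.integral_comp_neg (a := η t) (b := η T) fun x => Real.exp x
    rw [this, integral_exp]
  rw [this]
  ring
end
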